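/- Define Φ(V) = (γN V/(2r))·(r - μ_T - γV + sqrt((r - μ_T - γV)^2 + 4αr/T_max))·T_max for V ≥ 0. Then V = 0 and V = V_i := αN/μ_V - μ_T/γ + (r/γ)(1 - μ_V/(γNT_max)) are the only real solutions of Φ(V) = μ_V·V, provided V_i ≠ 0. -/

import Mathlib

open Real

theorem stmt7 (α γ μT μV Tmax N r : ℝ) (hα : 0 < α) (hγ : 0 < γ) (hμT : 0 < μT)
    (hμV : 0 < μV) (hTmax : 0 < Tmax) (hN : 0 < N) (hr : 0 < r)
    (Φ : ℝ → ℝ) (Vi : ℝ)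
    (hΦ : ∀ V, Φ V = γ * N * V / (2 * r) *
      (r - μT - γ * V + Real.sqrt ((r - μT - γ * V) ^ 2 + 4 * α * r / Tmax)) * Tmax)
    (hVi : Vi = α * N / μV - μT / γ + r / γ * (1 - μV / (γ * N * Tmax)))
    (hVine : Vi ≠ 0) :
    ∀ V : ℝ, 0 ≤ V → (Φ V = μV * V ↔ V = 0 ∨ V = Vi) := by
  intro V hV
  have hγN : (0:ℝ) < γ * N * Tmax := by positivity
  have hKT : (4 * α * r / Tmax) * Tmax = 4 * α * r := by field_simp
  have hVic : μV * (γ^2*N*Tmax) * Vi =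
      α*N*(γ^2*N*Tmax) - μT*μV*γ*N*Tmax + r*μV*γ*N*Tmax - r*μV^2 := by
    rw [hVi]; field_simp; ring
  constructor
  · intro h
    rcases eq_or_lt_of_le hV with h0 | hVpos
    · exact Or.inl h0.symm
    right
    rw [hΦ] at h
    set A : ℝ := r - μT - γ * V with hA
    set K : ℝ := 4 * α * r / Tmax with hK
    set s : ℝ := Real.sqrt (A ^ 2 + K) with hsdef
    have hKpos : 0 < K := by rw [hK]; positivity
    have hs2 : s ^ 2 = A ^ 2 + K := Real.sq_sqrt (by positivity)
    have h2 : (γ * N * Tmax * (A + s) - 2 * r * μV) * V = 0 := by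
      have h2r : (2*r : ℝ) ≠ 0 := by positivity
      field_simp at h
      linear_combination V * h
    have h1 : γ * N * Tmax * (A + s) = 2 * r * μV := by
      rcases mul_eq_zero.mp h2 with h3 | h3
      · linarith
      · exact absurd h3 (ne_of_gt hVpos)
    have hsv : γ * N * Tmax * s = 2 * r * μV - γ * N * Tmax * A := by linarith
    have hE : (2*r*μV - γ*N*Tmax*A)^2 = (γ*N*Tmax)^2 * (A^2 + K) := by
      rw [← hsv]; ring_nf; linear_combination (γ*N*Tmax)^2 * hs2
    have hAval : 4*r*μV*(γ*N*Tmax)*A = 4*r^2*μV^2 - (γ*N*Tmax)^2*K := by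
      linear_combination - hE
    have hP : (4*r*μV*γ^2*N*Tmax) * (V - Vi) = 0 := by
      rw [hA] at hAval
      linear_combination (-1) * hAval - (4*r) * hVic + (γ^2*N^2*Tmax) * hKT
    have hne : (4*r*μV*γ^2*N*Tmax : ℝ) ≠ 0 := by positivity
    have := mul_eq_zero.mp hP
    rcases this with h3 | h3
    · exact absurd h3 hne
    · linarith
  · rintro (rfl | rfl)
    · simp [hΦ]
    · rw [hΦ]
      set c : ℝ := 2 * r * μV / (γ * N * Tmax) with hc
      set A : ℝ := r - μT - γ * V with hA
      set K : ℝ := 4 * α * r / Tmax with hK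
      have hAeq : A = c/2 - K/(2*c) := by
        rw [hA, hc, hK, hVi]
        have h1 : (γ * N * Tmax) ≠ 0 := ne_of_gt hγN
        field_simp
        ring
      have hcpos : 0 < c := by rw [hc]; positivity
      have hKpos : 0 < K := by rw [hK]; positivity
      have hca : 0 ≤ c - A := by
        rw [hAeq]
        have : 0 < c/2 + K/(2*c) := by positivity
        linarith
      have hsq : A ^ 2 + K = (c - A)^2 := by
        rw [hAeq]
        field_simp
        ring
      rw [hsq, Real.sqrt_sq hca]
      have : A + (c - A) = c := by ring
      rw [this, hc]
      field_simp
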